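/- arXiv:2103.03693 — 3 statements merged into one kernel-verified Lean document; each statement's English description precedes it below -/
import Mathlib

section
/- For every shape transformation φ of ℝ^n and every smooth metric g of Kundt shape on ℝ^n, the pullback φ*g is again a smooth metric of Kundt shape; that is, shape transformations preserve the class of Kundt-shaped metrics (Theorem 1, forward direction). -/
open Matrix

noncomputable section

/-- We work on `ℝ^(n+3)` (so the dimension is an arbitrary integer `≥ 3`), with coordinates
`(u, x^1, …, x^{n+1}, v)`. Index of the coordinate `u`. -/
def uIdx (n : ℕ) : Fin (n + 3) := 0

/-- Index of the coordinate `v`. -/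
def vIdx (n : ℕ) : Fin (n + 3) := Fin.last (n + 2)

/-- Index of the coordinate `x^i`. -/
def xIdx (n : ℕ) (i : Fin (n + 1)) : Fin (n + 3) := ⟨i.val + 1, by omega⟩

/-- Partial derivative of a scalar function `f` on `ℝ^(n+3)` in the `j`-th coordinate at `p`. -/
def partialDeriv' (n : ℕ) (f : (Fin (n + 3) → ℝ) → ℝ) (j : Fin (n + 3))
    (p : Fin (n + 3) → ℝ) : ℝ :=
  deriv (fun t => f (Function.update p j t)) (p j)

/-- A smooth metric of Kundt shape on `ℝ^(n+3)`. -/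
structure IsKundtShape (n : ℕ)
    (g : (Fin (n + 3) → ℝ) → Matrix (Fin (n + 3)) (Fin (n + 3)) ℝ) : Prop where
  smooth : ∀ i j, ContDiff ℝ (⊤ : ℕ∞) fun p => g p i j
  symm : ∀ p, (g p).IsSymm
  vv : ∀ p, g p (vIdx n) (vIdx n) = 0
  xv : ∀ p i, g p (xIdx n i) (vIdx n) = 0
  uv : ∀ p, g p (uIdx n) (vIdx n) = 1
  posDef : ∀ p, (Matrix.of fun i j : Fin (n + 1) => g p (xIdx n i) (xIdx n j)).PosDef
  vIndep : ∀ p i j, partialDeriv' n (fun q => g q (xIdx n i) (xIdx n j)) (vIdx n) p = 0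

/-- A shape transformation `φ(u,x,v) = (C(u), A(u,x), v/C'(u) + B(u,x))`. -/
def IsShapeTransform (n : ℕ) (φ : (Fin (n + 3) → ℝ) → Fin (n + 3) → ℝ) : Prop :=
  ∃ (C : ℝ → ℝ) (A : ℝ → (Fin (n + 1) → ℝ) → Fin (n + 1) → ℝ) (B : ℝ → (Fin (n + 1) → ℝ) → ℝ),
    ContDiff ℝ (⊤ : ℕ∞) C ∧
    (∀ i, ContDiff ℝ (⊤ : ℕ∞) fun q : ℝ × (Fin (n + 1) → ℝ) => A q.1 q.2 i) ∧
    ContDiff ℝ (⊤ : ℕ∞) (fun q : ℝ × (Fin (n + 1) → ℝ) => B q.1 q.2) ∧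
    (∀ u, deriv C u ≠ 0) ∧
    (∀ u x, IsUnit (Matrix.of fun i j : Fin (n + 1) =>
        deriv (fun t => A u (Function.update x j t) i) (x j))) ∧
    (∀ p, φ p (uIdx n) = C (p (uIdx n))) ∧
    (∀ p i, φ p (xIdx n i) = A (p (uIdx n)) (fun j => p (xIdx n j)) i) ∧
    (∀ p, φ p (vIdx n) =
      p (vIdx n) / deriv C (p (uIdx n)) + B (p (uIdx n)) (fun j => p (xIdx n j)))

/-- The Jacobian matrix `Dφ_p` of `φ` at `p`. -/
def jacobianMatrix (n : ℕ) (φ : (Fin (n + 3) → ℝ) → Fin (n + 3) → ℝ)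
    (p : Fin (n + 3) → ℝ) : Matrix (Fin (n + 3)) (Fin (n + 3)) ℝ :=
  Matrix.of fun i j => partialDeriv' n (fun q => φ q i) j p

/-- The pullback metric `(φ*g)(p) = (Dφ_p)ᵀ · g(φ(p)) · Dφ_p`. -/
def pullbackMetric (n : ℕ) (φ : (Fin (n + 3) → ℝ) → Fin (n + 3) → ℝ)
    (g : (Fin (n + 3) → ℝ) → Matrix (Fin (n + 3)) (Fin (n + 3)) ℝ)
    (p : Fin (n + 3) → ℝ) : Matrix (Fin (n + 3)) (Fin (n + 3)) ℝ :=
  (jacobianMatrix n φ p)ᵀ * g (φ p) * jacobianMatrix n φ p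

section AuxLemmas
variable {n : ℕ}
lemma uIdx_ne_xIdx (i : Fin (n + 1)) : uIdx n ≠ xIdx n i := by
  simp only [uIdx, xIdx, Fin.ext_iff, Fin.val_zero, ne_eq]; omega
lemma xIdx_ne_vIdx (i : Fin (n + 1)) : xIdx n i ≠ vIdx n := by
  simp only [vIdx, xIdx, Fin.ext_iff, Fin.val_last, ne_eq]; omega
lemma uIdx_ne_vIdx : uIdx n ≠ vIdx n := by
  simp only [uIdx, vIdx, Fin.ext_iff, Fin.val_last, Fin.val_zero, ne_eq]; omega
lemma xIdx_injective : Function.Injective (xIdx n) := by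
  intro i j h
  have := congrArg Fin.val h
  simp only [xIdx] at this
  exact Fin.ext (by omega)
lemma idx_cases (c : Fin (n + 3)) :
    c = uIdx n ∨ (∃ i : Fin (n + 1), c = xIdx n i) ∨ c = vIdx n := by
  rcases c with ⟨c, hc⟩
  rcases Nat.eq_zero_or_pos c with h | h
  · left; simp [uIdx, Fin.ext_iff, h]
  · rcases Nat.lt_or_ge c (n + 2) with h2 | h2
    · exact Or.inr (Or.inl ⟨⟨c - 1, by omega⟩, by simp only [xIdx, Fin.ext_iff]; omega⟩)
    · right; right; simp only [vIdx, Fin.ext_iff, Fin.val_last]; omega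
lemma sum_split (f : Fin (n + 3) → ℝ) :
    ∑ c, f c = f (uIdx n) + (∑ k : Fin (n + 1), f (xIdx n k)) + f (vIdx n) := by
  rw [Fin.sum_univ_succ, Fin.sum_univ_castSucc, ← add_assoc]
  rfl
lemma partialDeriv'_eq (f : (Fin (n + 3) → ℝ) → ℝ) (hf : Differentiable ℝ f)
    (j : Fin (n + 3)) (p : Fin (n + 3) → ℝ) :
    partialDeriv' n f j p = fderiv ℝ f p (Pi.single j 1) := by
  have h3 : HasFDerivAt f (fderiv ℝ f p) (Function.update p j (p j)) := by
    rw [Function.update_eq_self]; exact (hf p).hasFDerivAt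
  exact (h3.comp_hasDerivAt (p j) (hasDerivAt_update p j (p j))).deriv
lemma contDiff_partialDeriv' {f : (Fin (n + 3) → ℝ) → ℝ} (hf : ContDiff ℝ (⊤ : ℕ∞) f)
    (j : Fin (n + 3)) : ContDiff ℝ (⊤ : ℕ∞) fun p => partialDeriv' n f j p := by
  have hd : Differentiable ℝ f := hf.differentiable (by simp)
  have he : (fun p => partialDeriv' n f j p) = fun p => fderiv ℝ f p (Pi.single j 1) :=
    funext fun p => partialDeriv'_eq f hd j p
  rw [he]
  exact (hf.fderiv_right (le_of_eq rfl)).clm_apply contDiff_const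
lemma update_const_of_partialDeriv_zero {f : (Fin (n + 3) → ℝ) → ℝ}
    (hf : ContDiff ℝ (⊤ : ℕ∞) f) (j : Fin (n + 3))
    (h : ∀ q, partialDeriv' n f j q = 0) (p : Fin (n + 3) → ℝ) (t : ℝ) :
    f (Function.update p j t) = f p := by
  have hd : Differentiable ℝ f := hf.differentiable (by simp)
  have hdiff : Differentiable ℝ (fun s => f (Function.update p j s)) := fun s =>
    ((hd _).hasFDerivAt.comp_hasDerivAt s (hasDerivAt_update p j s)).differentiableAt
  have hzero : ∀ s, deriv (fun s => f (Function.update p j s)) s = 0 := by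
    intro s
    have h2 := h (Function.update p j s)
    simpa only [partialDeriv', Function.update_idem, Function.update_self] using h2
  have := is_const_of_deriv_eq_zero hdiff hzero t (p j)
  simpa using this
lemma posDef_transpose_mul_mul {m : Type*} [Fintype m] [DecidableEq m]
    {M B : Matrix m m ℝ} (hM : M.PosDef) (hB : IsUnit B) : (Bᵀ * M * B).PosDef := by
  have hBt : Bᵀ = Bᴴ := (Matrix.conjTranspose_eq_transpose_of_trivial B).symm
  rw [hBt]
  refine Matrix.posDef_iff_dotProduct_mulVec.mpr ⟨Matrix.isHermitian_conjTranspose_mul_mul B hM.1, fun x hx => ?_⟩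
  have hinj := Matrix.mulVec_injective_iff_isUnit.mpr hB
  have hxB : B *ᵥ x ≠ 0 := fun h0 => hx (hinj (show B *ᵥ x = B *ᵥ 0 by rw [h0, Matrix.mulVec_zero]))
  simpa only [star_mulVec, dotProduct_mulVec, vecMul_vecMul] using hM.dotProduct_mulVec_pos hxB
end AuxLemmas


/-- **Theorem 1 (forward direction).** Shape transformations preserve the class of
smooth metrics of Kundt shape. -/
theorem shapeTransform_preserves_kundtShape (n : ℕ)
    (φ : (Fin (n + 3) → ℝ) → Fin (n + 3) → ℝ)
    (g : (Fin (n + 3) → ℝ) → Matrix (Fin (n + 3)) (Fin (n + 3)) ℝ)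
    (hφ : IsShapeTransform n φ) (hg : IsKundtShape n g) :
    IsKundtShape n (pullbackMetric n φ g) := by
  obtain ⟨C, A, B, hC, hA, hB, hC', hAunit, hu, hx, hv⟩ := hφ
  -- Jacobian entries
  have hJuu : ∀ p, jacobianMatrix n φ p (uIdx n) (uIdx n) = deriv C (p (uIdx n)) := by
    intro p
    show deriv (fun t => φ (Function.update p (uIdx n) t) (uIdx n)) (p (uIdx n)) = _
    have he : (fun t => φ (Function.update p (uIdx n) t) (uIdx n)) = C := by
      funext t; rw [hu, Function.update_self]
    rw [he]
  have hJux : ∀ p i, jacobianMatrix n φ p (uIdx n) (xIdx n i) = 0 := by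
    intro p i
    show deriv (fun t => φ (Function.update p (xIdx n i) t) (uIdx n)) (p (xIdx n i)) = 0
    have he : (fun t => φ (Function.update p (xIdx n i) t) (uIdx n)) =
        fun _ => C (p (uIdx n)) := by
      funext t; rw [hu, Function.update_of_ne (uIdx_ne_xIdx i)]
    rw [he, deriv_const]
  have hJuv : ∀ p, jacobianMatrix n φ p (uIdx n) (vIdx n) = 0 := by
    intro p
    show deriv (fun t => φ (Function.update p (vIdx n) t) (uIdx n)) (p (vIdx n)) = 0
    have he : (fun t => φ (Function.update p (vIdx n) t) (uIdx n)) =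
        fun _ => C (p (uIdx n)) := by
      funext t; rw [hu, Function.update_of_ne uIdx_ne_vIdx]
    rw [he, deriv_const]
  have hJxv : ∀ p i, jacobianMatrix n φ p (xIdx n i) (vIdx n) = 0 := by
    intro p i
    show deriv (fun t => φ (Function.update p (vIdx n) t) (xIdx n i)) (p (vIdx n)) = 0
    have he : (fun t => φ (Function.update p (vIdx n) t) (xIdx n i)) =
        fun _ => A (p (uIdx n)) (fun j => p (xIdx n j)) i := by
      funext t
      rw [hx]
      rw [show Function.update p (vIdx n) t (uIdx n) = p (uIdx n) from
        Function.update_of_ne uIdx_ne_vIdx _ _]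
      rw [show (fun j => Function.update p (vIdx n) t (xIdx n j)) = fun j => p (xIdx n j) from
        funext fun j => Function.update_of_ne (xIdx_ne_vIdx j) _ _]
    rw [he, deriv_const]
  have hJxx : ∀ p i j, jacobianMatrix n φ p (xIdx n i) (xIdx n j) =
      deriv (fun t => A (p (uIdx n)) (Function.update (fun k => p (xIdx n k)) j t) i)
        (p (xIdx n j)) := by
    intro p i j
    show deriv (fun t => φ (Function.update p (xIdx n j) t) (xIdx n i)) (p (xIdx n j)) = _
    have he : (fun t => φ (Function.update p (xIdx n j) t) (xIdx n i)) =
        fun t => A (p (uIdx n)) (Function.update (fun k => p (xIdx n k)) j t) i := by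
      funext t
      rw [hx]
      rw [show Function.update p (xIdx n j) t (uIdx n) = p (uIdx n) from
        Function.update_of_ne (uIdx_ne_xIdx j) _ _]
      rw [show (fun k => Function.update p (xIdx n j) t (xIdx n k)) =
          Function.update (fun k => p (xIdx n k)) j t from by
        funext k
        by_cases hk : k = j
        · subst hk; rw [Function.update_self, Function.update_self]
        · rw [Function.update_of_ne (fun hc => hk (xIdx_injective hc)),
            Function.update_of_ne hk]]
    rw [he]
  have hJvv : ∀ p, jacobianMatrix n φ p (vIdx n) (vIdx n) = (deriv C (p (uIdx n)))⁻¹ := by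
    intro p
    show deriv (fun t => φ (Function.update p (vIdx n) t) (vIdx n)) (p (vIdx n)) = _
    have he : (fun t => φ (Function.update p (vIdx n) t) (vIdx n)) =
        fun t => t / deriv C (p (uIdx n)) + B (p (uIdx n)) (fun j => p (xIdx n j)) := by
      funext t
      rw [hv, Function.update_self]
      rw [show Function.update p (vIdx n) t (uIdx n) = p (uIdx n) from
        Function.update_of_ne uIdx_ne_vIdx _ _]
      rw [show (fun j => Function.update p (vIdx n) t (xIdx n j)) = fun j => p (xIdx n j) from
        funext fun j => Function.update_of_ne (xIdx_ne_vIdx j) _ _]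
    rw [he, deriv_add_const, deriv_div_const, deriv_id'', one_div]
  -- structural zero lemmas for g
  have hgv : ∀ (q : Fin (n + 3) → ℝ) d, g q d (vIdx n) = if d = uIdx n then 1 else 0 := by
    intro q d
    rcases idx_cases d with h | ⟨i, h⟩ | h <;> subst h
    · rw [if_pos rfl]; exact hg.uv q
    · rw [if_neg (fun hc => (uIdx_ne_xIdx i) hc.symm)]; exact hg.xv q i
    · rw [if_neg (fun hc => uIdx_ne_vIdx hc.symm)]; exact hg.vv q
  have hgvx : ∀ (q : Fin (n + 3) → ℝ) l, g q (vIdx n) (xIdx n l) = 0 := by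
    intro q l
    rw [(hg.symm q).apply (xIdx n l) (vIdx n)]
    exact hg.xv q l
  have hDv : ∀ p c, jacobianMatrix n φ p c (vIdx n) =
      if c = vIdx n then (deriv C (p (uIdx n)))⁻¹ else 0 := by
    intro p c
    rcases idx_cases c with h | ⟨i, h⟩ | h <;> subst h
    · rw [if_neg uIdx_ne_vIdx]; exact hJuv p
    · rw [if_neg (xIdx_ne_vIdx i)]; exact hJxv p i
    · rw [if_pos rfl]; exact hJvv p
  -- the v-column of the pullback
  have hKey : ∀ p a, pullbackMetric n φ g p a (vIdx n) =
      jacobianMatrix n φ p (uIdx n) a * (deriv C (p (uIdx n)))⁻¹ := by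
    intro p a
    show ((jacobianMatrix n φ p)ᵀ * g (φ p) * jacobianMatrix n φ p) a (vIdx n) = _
    rw [Matrix.mul_apply]
    have h1 : ∀ c, ((jacobianMatrix n φ p)ᵀ * g (φ p)) a c * jacobianMatrix n φ p c (vIdx n) =
        if c = vIdx n then ((jacobianMatrix n φ p)ᵀ * g (φ p)) a c *
          (deriv C (p (uIdx n)))⁻¹ else 0 := by
      intro c; rw [hDv p c]; split_ifs <;> simp
    rw [Finset.sum_congr rfl (fun c _ => h1 c), Finset.sum_ite_eq', if_pos (Finset.mem_univ _)]
    congr 1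
    rw [Matrix.mul_apply]
    have h2 : ∀ d, (jacobianMatrix n φ p)ᵀ a d * g (φ p) d (vIdx n) =
        if d = uIdx n then (jacobianMatrix n φ p)ᵀ a d else 0 := by
      intro d; rw [hgv (φ p) d]; split_ifs <;> simp
    rw [Finset.sum_congr rfl (fun d _ => h2 d), Finset.sum_ite_eq', if_pos (Finset.mem_univ _)]
    rfl
  -- the x-block of the pullback
  have hBlockEntry : ∀ p i j, pullbackMetric n φ g p (xIdx n i) (xIdx n j) =
      ∑ l, (∑ k, jacobianMatrix n φ p (xIdx n k) (xIdx n i) *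
        g (φ p) (xIdx n k) (xIdx n l)) * jacobianMatrix n φ p (xIdx n l) (xIdx n j) := by
    intro p i j
    show ((jacobianMatrix n φ p)ᵀ * g (φ p) * jacobianMatrix n φ p) (xIdx n i) (xIdx n j) = _
    rw [Matrix.mul_apply, sum_split]
    rw [show ((jacobianMatrix n φ p)ᵀ * g (φ p)) (xIdx n i) (uIdx n) *
        jacobianMatrix n φ p (uIdx n) (xIdx n j) = 0 from by rw [hJux p j, mul_zero]]
    rw [show ((jacobianMatrix n φ p)ᵀ * g (φ p)) (xIdx n i) (vIdx n) *
        jacobianMatrix n φ p (vIdx n) (xIdx n j) = 0 from by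
      have hz : ((jacobianMatrix n φ p)ᵀ * g (φ p)) (xIdx n i) (vIdx n) = 0 := by
        rw [Matrix.mul_apply]
        have h2 : ∀ d, (jacobianMatrix n φ p)ᵀ (xIdx n i) d * g (φ p) d (vIdx n) =
            if d = uIdx n then (jacobianMatrix n φ p)ᵀ (xIdx n i) d else 0 := by
          intro d; rw [hgv (φ p) d]; split_ifs <;> simp
        rw [Finset.sum_congr rfl (fun d _ => h2 d), Finset.sum_ite_eq',
          if_pos (Finset.mem_univ _)]
        exact hJux p i
      rw [hz, zero_mul]]
    rw [zero_add, add_zero]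
    refine Finset.sum_congr rfl fun l _ => ?_
    congr 1
    rw [Matrix.mul_apply, sum_split]
    rw [show (jacobianMatrix n φ p)ᵀ (xIdx n i) (uIdx n) * g (φ p) (uIdx n) (xIdx n l) = 0 from
      by rw [show (jacobianMatrix n φ p)ᵀ (xIdx n i) (uIdx n) =
          jacobianMatrix n φ p (uIdx n) (xIdx n i) from rfl, hJux p i, zero_mul]]
    rw [show (jacobianMatrix n φ p)ᵀ (xIdx n i) (vIdx n) * g (φ p) (vIdx n) (xIdx n l) = 0 from
      by rw [hgvx (φ p) l, mul_zero]]
    rw [zero_add, add_zero]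
    rfl
  constructor
  -- smooth
  · intro a b
    have hproj : ∀ c : Fin (n + 3), ContDiff ℝ (⊤ : ℕ∞) (fun p : Fin (n + 3) → ℝ => p c) :=
      fun c => (ContinuousLinearMap.proj c : ((Fin (n + 3)) → ℝ) →L[ℝ] ℝ).contDiff
    have hmpair : ContDiff ℝ (⊤ : ℕ∞)
        (fun p : Fin (n + 3) → ℝ => ((p (uIdx n), fun j => p (xIdx n j)) :
          ℝ × (Fin (n + 1) → ℝ))) :=
      ContDiff.prodMk (hproj _) (contDiff_pi.2 fun j => hproj _)
    have hφc : ∀ c, ContDiff ℝ (⊤ : ℕ∞) (fun p => φ p c) := by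
      intro c
      rcases idx_cases c with h | ⟨i, h⟩ | h <;> subst h
      · rw [show (fun p => φ p (uIdx n)) = fun p => C (p (uIdx n)) from funext hu]
        exact hC.comp (hproj _)
      · rw [show (fun p => φ p (xIdx n i)) =
            (fun q : ℝ × (Fin (n + 1) → ℝ) => A q.1 q.2 i) ∘
              (fun p => (p (uIdx n), fun j => p (xIdx n j))) from funext fun p => hx p i]
        exact (hA i).comp hmpair
      · rw [show (fun p => φ p (vIdx n)) = fun p => p (vIdx n) / deriv C (p (uIdx n)) +
            B (p (uIdx n)) (fun j => p (xIdx n j)) from funext hv]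
        have hdC : ContDiff ℝ (⊤ : ℕ∞) (deriv C) := (contDiff_infty_iff_deriv.mp hC).2
        exact ((hproj _).div (hdC.comp (hproj _)) (fun p => hC' _)).add (hB.comp hmpair)
    have hφs : ContDiff ℝ (⊤ : ℕ∞) φ := contDiff_pi.2 hφc
    have hJs : ∀ a b, ContDiff ℝ (⊤ : ℕ∞) fun p => jacobianMatrix n φ p a b :=
      fun a b => contDiff_partialDeriv' (hφc a) b
    have he : (fun p => pullbackMetric n φ g p a b) = fun p =>
        ∑ c, (∑ d, jacobianMatrix n φ p d a * g (φ p) d c) * jacobianMatrix n φ p c b := by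
      funext p
      simp [pullbackMetric, Matrix.mul_apply, Matrix.transpose_apply]
    rw [he]
    refine ContDiff.sum fun c _ => ContDiff.mul (ContDiff.sum fun d _ => ContDiff.mul (hJs d a)
      ((hg.smooth d c).comp hφs)) (hJs c b)
  -- symm
  · intro p
    show (pullbackMetric n φ g p)ᵀ = pullbackMetric n φ g p
    simp only [pullbackMetric, Matrix.transpose_mul, Matrix.transpose_transpose,
      (hg.symm (φ p)).eq, Matrix.mul_assoc]
  -- vv
  · intro p
    rw [hKey, hJuv p, zero_mul]
  -- xv
  · intro p i
    rw [hKey, hJux p i, zero_mul]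
  -- uv
  · intro p
    rw [hKey, hJuu p]
    exact mul_inv_cancel₀ (hC' _)
  -- posDef
  · intro p
    have heq : (Matrix.of fun i j : Fin (n + 1) =>
        pullbackMetric n φ g p (xIdx n i) (xIdx n j)) =
        (Matrix.of fun a b : Fin (n + 1) =>
          deriv (fun t => A (p (uIdx n)) (Function.update (fun m => p (xIdx n m)) b t) a)
            ((fun m => p (xIdx n m)) b))ᵀ *
        (Matrix.of fun k l : Fin (n + 1) => g (φ p) (xIdx n k) (xIdx n l)) *
        (Matrix.of fun a b : Fin (n + 1) =>
          deriv (fun t => A (p (uIdx n)) (Function.update (fun m => p (xIdx n m)) b t) a)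
            ((fun m => p (xIdx n m)) b)) := by
      ext i j
      show pullbackMetric n φ g p (xIdx n i) (xIdx n j) = _
      rw [hBlockEntry p i j, Matrix.mul_apply]
      refine Finset.sum_congr rfl fun l _ => ?_
      rw [Matrix.mul_apply]
      rw [hJxx p l j]
      congr 1
      refine Finset.sum_congr rfl fun k _ => ?_
      rw [hJxx p k i]
      rfl
    rw [heq]
    exact posDef_transpose_mul_mul (hg.posDef (φ p)) (hAunit (p (uIdx n)) (fun m => p (xIdx n m)))
  -- vIndep
  · intro p i j
    have hconst : ∀ t, pullbackMetric n φ g (Function.update p (vIdx n) t)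
        (xIdx n i) (xIdx n j) = pullbackMetric n φ g p (xIdx n i) (xIdx n j) := by
      intro t
      set q := Function.update p (vIdx n) t with hq
      have hqu : q (uIdx n) = p (uIdx n) := Function.update_of_ne uIdx_ne_vIdx _ _
      have hqx : ∀ k, q (xIdx n k) = p (xIdx n k) :=
        fun k => Function.update_of_ne (xIdx_ne_vIdx k) _ _
      have hxq : (fun m => q (xIdx n m)) = fun m => p (xIdx n m) := funext hqx
      have hφq : φ q = Function.update (φ p) (vIdx n) (φ q (vIdx n)) := by
        funext c
        rcases idx_cases c with h | ⟨k, h⟩ | h <;> subst h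
        · rw [Function.update_of_ne uIdx_ne_vIdx, hu, hu, hqu]
        · rw [Function.update_of_ne (xIdx_ne_vIdx k), hx, hx, hqu, hxq]
        · rw [Function.update_self]
      have hgsame : ∀ k l, g (φ q) (xIdx n k) (xIdx n l) = g (φ p) (xIdx n k) (xIdx n l) := by
        intro k l
        rw [hφq]
        exact update_const_of_partialDeriv_zero (hg.smooth _ _) (vIdx n)
          (fun r => hg.vIndep r k l) (φ p) _
      rw [hBlockEntry q i j, hBlockEntry p i j]
      refine Finset.sum_congr rfl fun l _ => ?_
      rw [hJxx q l j, hJxx p l j, hqu, hxq, hqx j]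
      congr 1
      refine Finset.sum_congr rfl fun k _ => ?_
      rw [hJxx q k i, hJxx p k i, hqu, hxq, hqx i, hgsame k l]
    show deriv (fun t => pullbackMetric n φ g (Function.update p (vIdx n) t)
      (xIdx n i) (xIdx n j)) (p (vIdx n)) = 0
    rw [show (fun t => pullbackMetric n φ g (Function.update p (vIdx n) t)
        (xIdx n i) (xIdx n j)) = fun _ => pullbackMetric n φ g p (xIdx n i) (xIdx n j) from
      funext hconst, deriv_const]
end
end

section
/- Let n = 3 with coordinates (u, x, v) on ℝ³, let g be a smooth metric of Kundt shape and let φ be a shape transformation. Then the second v-derivative of the (u,x)-entry of g is a relative invariant: there exists a smooth nowhere-vanishing function λ : ℝ³ → ℝ such that ∂²_v (φ*g)_{ux}(p) = λ(p) · (∂²_v g_{ux})(φ(p)) for all p ∈ ℝ³ (Appendix: W_{vv} is a relative differential invariant of the shape-preserving pseudogroup). -/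
open Matrix

noncomputable section

/-- Coordinates on `ℝ³` are `(u, x, v)` with indices `0, 1, 2`.
A smooth metric of Kundt shape on `ℝ³`. -/
structure IsKundtShape3 (g : (Fin 3 → ℝ) → Matrix (Fin 3) (Fin 3) ℝ) : Prop where
  smooth : ∀ i j, ContDiff ℝ (⊤ : ℕ∞) fun p => g p i j
  symm : ∀ p, (g p).IsSymm
  vv : ∀ p, g p 2 2 = 0
  xv : ∀ p, g p 1 2 = 0
  uv : ∀ p, g p 0 2 = 1
  xx_pos : ∀ p, 0 < g p 1 1
  vIndep : ∀ p, deriv (fun t => g (Function.update p 2 t) 1 1) (p 2) = 0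

/-- A shape transformation `φ(u,x,v) = (C(u), A(u,x), v/C'(u) + B(u,x))` of `ℝ³`. -/
def IsShapeTransform3 (φ : (Fin 3 → ℝ) → Fin 3 → ℝ) : Prop :=
  ∃ C : ℝ → ℝ, ∃ A B : ℝ → ℝ → ℝ,
    ContDiff ℝ (⊤ : ℕ∞) C ∧
    ContDiff ℝ (⊤ : ℕ∞) (fun q : ℝ × ℝ => A q.1 q.2) ∧
    ContDiff ℝ (⊤ : ℕ∞) (fun q : ℝ × ℝ => B q.1 q.2) ∧
    (∀ u, deriv C u ≠ 0) ∧
    (∀ u x, deriv (A u) x ≠ 0) ∧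
    (∀ p, φ p 0 = C (p 0)) ∧
    (∀ p, φ p 1 = A (p 0) (p 1)) ∧
    (∀ p, φ p 2 = p 2 / deriv C (p 0) + B (p 0) (p 1))

/-- The Jacobian matrix `Dφ_p` of `φ : ℝ³ → ℝ³` at `p`. -/
def jacobianMatrix3 (φ : (Fin 3 → ℝ) → Fin 3 → ℝ) (p : Fin 3 → ℝ) :
    Matrix (Fin 3) (Fin 3) ℝ :=
  Matrix.of fun i j => deriv (fun t => φ (Function.update p j t) i) (p j)

/-- The pullback metric `(φ*g)(p) = (Dφ_p)ᵀ · g(φ(p)) · Dφ_p`. -/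
def pullbackMetric3 (φ : (Fin 3 → ℝ) → Fin 3 → ℝ)
    (g : (Fin 3 → ℝ) → Matrix (Fin 3) (Fin 3) ℝ) (p : Fin 3 → ℝ) :
    Matrix (Fin 3) (Fin 3) ℝ :=
  (jacobianMatrix3 φ p)ᵀ * g (φ p) * jacobianMatrix3 φ p

/-- Second partial derivative in the coordinate `v` of a scalar function on `ℝ³`, at `p`. -/
def d2v (f : (Fin 3 → ℝ) → ℝ) (p : Fin 3 → ℝ) : ℝ :=
  deriv (deriv (fun t => f (Function.update p 2 t))) (p 2)

/-- Third partial derivative in the coordinate `v` of a scalar function on `ℝ³`, at `p`. -/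
def d3v (f : (Fin 3 → ℝ) → ℝ) (p : Fin 3 → ℝ) : ℝ :=
  deriv (deriv (deriv (fun t => f (Function.update p 2 t)))) (p 2)

section Aux

/-- First derivative of `t ↦ m * w (t/c + b) + K`. -/
lemma deriv_affine_comp (w : ℝ → ℝ) (hw : Differentiable ℝ w) (m c b K : ℝ) :
    deriv (fun t => m * w (t / c + b) + K) = fun t => m / c * deriv w (t / c + b) := by
  funext t
  have hσ : HasDerivAt (fun t : ℝ => t / c + b) (1 / c) t := by
    simpa using ((hasDerivAt_id t).div_const c).add_const b
  have h1 : HasDerivAt (fun t => w (t / c + b)) (deriv w (t / c + b) * (1 / c)) t :=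
    ((hw (t / c + b)).hasDerivAt).comp t hσ
  have h2 := (h1.const_mul m).add_const K
  rw [h2.deriv]; ring

/-- Second derivative of `t ↦ m * w (t/c + b) + K`. -/
lemma deriv2_affine_comp (w : ℝ → ℝ) (hw : ContDiff ℝ (⊤ : ℕ∞) w) (m c b K t0 : ℝ) :
    deriv (deriv (fun t => m * w (t / c + b) + K)) t0 =
      m / c ^ 2 * deriv (deriv w) (t0 / c + b) := by
  have hw' : ContDiff ℝ (⊤ : ℕ∞) (deriv w) := (contDiff_infty_iff_deriv.mp hw).2
  rw [deriv_affine_comp w (hw.differentiable (by simp)) m c b K]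
  have heq : (fun t => m / c * deriv w (t / c + b)) =
      fun t => m / c * deriv w (t / c + b) + 0 := by funext t; ring
  rw [heq, deriv_affine_comp (deriv w) (hw'.differentiable (by simp)) (m / c) c b 0,
    div_div, sq]

end Aux

/-- **Appendix.** `W_{vv} = ∂²_v g_{ux}` is a relative differential invariant of the
shape-preserving pseudogroup in dimension 3. -/
theorem Wvv_is_relative_invariant
    (g : (Fin 3 → ℝ) → Matrix (Fin 3) (Fin 3) ℝ)
    (φ : (Fin 3 → ℝ) → Fin 3 → ℝ)
    (hg : IsKundtShape3 g) (hφ : IsShapeTransform3 φ) :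
    ∃ lam : (Fin 3 → ℝ) → ℝ,
      ContDiff ℝ (⊤ : ℕ∞) lam ∧ (∀ p, lam p ≠ 0) ∧
      ∀ p : Fin 3 → ℝ,
        d2v (fun q => pullbackMetric3 φ g q 0 1) p =
          lam p * d2v (fun q => g q 0 1) (φ p) := by
  obtain ⟨C, A, B, hC, hA, hB, hC', hA', hφ0, hφ1, hφ2⟩ := hφ
  -- smoothness of the multiplier
  have hproj0 : ContDiff ℝ (⊤ : ℕ∞) (fun p : Fin 3 → ℝ => p 0) := (contDiff_pi.mp contDiff_id) 0
  have hproj1 : ContDiff ℝ (⊤ : ℕ∞) (fun p : Fin 3 → ℝ => p 1) := (contDiff_pi.mp contDiff_id) 1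
  have hAx_eq : ∀ u x : ℝ, deriv (A u) x =
      fderiv ℝ (fun q : ℝ × ℝ => A q.1 q.2) (u, x) ((0 : ℝ), (1 : ℝ)) := by
    intro u x
    have hdiff : DifferentiableAt ℝ (fun q : ℝ × ℝ => A q.1 q.2) (u, x) :=
      (hA.differentiable (by simp)).differentiableAt
    have hmk : HasDerivAt (fun x : ℝ => ((u, x) : ℝ × ℝ)) ((0 : ℝ), (1 : ℝ)) x :=
      (hasDerivAt_const x u).prodMk (hasDerivAt_id x)
    have h' : HasDerivAt (A u)
        (fderiv ℝ (fun q : ℝ × ℝ => A q.1 q.2) (u, x) ((0 : ℝ), (1 : ℝ))) x :=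
      hdiff.hasFDerivAt.comp_hasDerivAt x hmk
    exact h'.deriv
  have hAx_smooth : ContDiff ℝ (⊤ : ℕ∞) (fun p : Fin 3 → ℝ => deriv (A (p 0)) (p 1)) := by
    have h1 : ContDiff ℝ (⊤ : ℕ∞)
        (fun q : ℝ × ℝ => fderiv ℝ (fun q : ℝ × ℝ => A q.1 q.2) q ((0 : ℝ), (1 : ℝ))) :=
      ((contDiff_infty_iff_fderiv.mp hA).2).clm_apply contDiff_const
    have h2 := h1.comp (hproj0.prodMk hproj1)
    have : (fun p : Fin 3 → ℝ => deriv (A (p 0)) (p 1)) =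
        ((fun q : ℝ × ℝ => fderiv ℝ (fun q : ℝ × ℝ => A q.1 q.2) q ((0 : ℝ), (1 : ℝ))) ∘
          fun p : Fin 3 → ℝ => (p 0, p 1)) := by
      funext p; exact hAx_eq (p 0) (p 1)
    rw [this]; exact h2
  have hC'smooth : ContDiff ℝ (⊤ : ℕ∞) (deriv C) := (contDiff_infty_iff_deriv.mp hC).2
  refine ⟨fun p => deriv (A (p 0)) (p 1) / deriv C (p 0), ?_, ?_, ?_⟩
  · exact hAx_smooth.div (hC'smooth.comp hproj0) fun p => hC' (p 0)
  · exact fun p => div_ne_zero (hA' (p 0) (p 1)) (hC' (p 0))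
  intro p
  -- Jacobian entries and the pullback (0,1) entry at an arbitrary point q
  have hpull : ∀ q : Fin 3 → ℝ, pullbackMetric3 φ g q 0 1 =
      deriv C (q 0) * deriv (A (q 0)) (q 1) * g (φ q) 0 1
      + deriv C (q 0) * deriv (B (q 0)) (q 1)
      + deriv (fun t => A t (q 1)) (q 0) * deriv (A (q 0)) (q 1) * g (φ q) 1 1 := by
    intro q
    have J00 : jacobianMatrix3 φ q 0 0 = deriv C (q 0) := by
      have : (fun t => φ (Function.update q 0 t) 0) = fun t => C t := by
        funext t; rw [hφ0]; simp
      simp only [jacobianMatrix3, Matrix.of_apply, this]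
    have J10 : jacobianMatrix3 φ q 1 0 = deriv (fun t => A t (q 1)) (q 0) := by
      have : (fun t => φ (Function.update q 0 t) 1) = fun t => A t (q 1) := by
        funext t; rw [hφ1]; simp [Function.update_of_ne]
      simp only [jacobianMatrix3, Matrix.of_apply, this]
    have J01 : jacobianMatrix3 φ q 0 1 = 0 := by
      have : (fun t => φ (Function.update q 1 t) 0) = fun _ => C (q 0) := by
        funext t; rw [hφ0]; simp [Function.update_of_ne]
      simp only [jacobianMatrix3, Matrix.of_apply, this, deriv_const]
    have J11 : jacobianMatrix3 φ q 1 1 = deriv (A (q 0)) (q 1) := by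
      have : (fun t => φ (Function.update q 1 t) 1) = fun t => A (q 0) t := by
        funext t; rw [hφ1]; simp [Function.update_of_ne]
      simp only [jacobianMatrix3, Matrix.of_apply, this]
    have J21 : jacobianMatrix3 φ q 2 1 = deriv (B (q 0)) (q 1) := by
      have : (fun t => φ (Function.update q 1 t) 2) =
          fun t => q 2 / deriv C (q 0) + B (q 0) t := by
        funext t; rw [hφ2]; simp [Function.update_of_ne]
      simp only [jacobianMatrix3, Matrix.of_apply, this, deriv_const_add]
    have g20 : g (φ q) 2 0 = 1 := by rw [(hg.symm (φ q)).apply 0 2, hg.uv]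
    have g21 : g (φ q) 2 1 = 0 := by rw [(hg.symm (φ q)).apply 1 2, hg.xv]
    simp only [pullbackMetric3, Matrix.mul_apply, Fin.sum_univ_three, Matrix.transpose_apply,
      J00, J10, J01, J11, J21, g20, g21, hg.vv, hg.xv, hg.uv]
    ring
  -- the curve t ↦ φ (update p 2 t)
  have hφup : ∀ t : ℝ, φ (Function.update p 2 t) =
      Function.update (φ p) 2 (t / deriv C (p 0) + B (p 0) (p 1)) := by
    intro t; funext i
    fin_cases i
    · show φ (Function.update p 2 t) 0 = Function.update (φ p) 2 _ 0
      simp [hφ0, Function.update_self, Function.update_of_ne]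
    · show φ (Function.update p 2 t) 1 = Function.update (φ p) 2 _ 1
      simp [hφ1, Function.update_self, Function.update_of_ne]
    · show φ (Function.update p 2 t) 2 = Function.update (φ p) 2 _ 2
      simp [hφ2, Function.update_self, Function.update_of_ne]
  -- the v-independent xx-entry is constant along the v-line
  have hk_smooth : ContDiff ℝ (⊤ : ℕ∞) (fun s : ℝ => g (Function.update (φ p) 2 s) 1 1) :=
    (hg.smooth 1 1).comp (contDiff_update _ (φ p) 2)
  have hk0 : ∀ s : ℝ, deriv (fun t => g (Function.update (φ p) 2 t) 1 1) s = 0 := by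
    intro s
    have h := hg.vIndep (Function.update (φ p) 2 s)
    simpa only [Function.update_idem, Function.update_self] using h
  have hkconst : ∀ s : ℝ, g (Function.update (φ p) 2 s) 1 1 =
      g (Function.update (φ p) 2 0) 1 1 :=
    fun s => is_const_of_deriv_eq_zero
      (hk_smooth.differentiable (by simp)) hk0 s 0
  -- rewrite the function whose second v-derivative we take
  have hh_smooth : ContDiff ℝ (⊤ : ℕ∞) (fun s : ℝ => g (Function.update (φ p) 2 s) 0 1) :=
    (hg.smooth 0 1).comp (contDiff_update _ (φ p) 2)
  have hF : (fun t => pullbackMetric3 φ g (Function.update p 2 t) 0 1) =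
      fun t => (deriv C (p 0) * deriv (A (p 0)) (p 1)) *
          (fun s : ℝ => g (Function.update (φ p) 2 s) 0 1)
            (t / deriv C (p 0) + B (p 0) (p 1)) +
        (deriv C (p 0) * deriv (B (p 0)) (p 1)
          + deriv (fun t => A t (p 1)) (p 0) * deriv (A (p 0)) (p 1) *
            g (Function.update (φ p) 2 0) 1 1) := by
    funext t
    rw [hpull (Function.update p 2 t)]
    rw [Function.update_of_ne (by decide : (0 : Fin 3) ≠ 2),
      Function.update_of_ne (by decide : (1 : Fin 3) ≠ 2), hφup t,
      hkconst (t / deriv C (p 0) + B (p 0) (p 1))]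
    ring
  have key := deriv2_affine_comp (fun s : ℝ => g (Function.update (φ p) 2 s) 0 1)
    hh_smooth (deriv C (p 0) * deriv (A (p 0)) (p 1)) (deriv C (p 0)) (B (p 0) (p 1))
    (deriv C (p 0) * deriv (B (p 0)) (p 1)
      + deriv (fun t => A t (p 1)) (p 0) * deriv (A (p 0)) (p 1) *
        g (Function.update (φ p) 2 0) 1 1) (p 2)
  have lhs_eq : d2v (fun q => pullbackMetric3 φ g q 0 1) p =
      deriv C (p 0) * deriv (A (p 0)) (p 1) / deriv C (p 0) ^ 2 *
        deriv (deriv (fun s : ℝ => g (Function.update (φ p) 2 s) 0 1))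
          (p 2 / deriv C (p 0) + B (p 0) (p 1)) := by
    have h1 : d2v (fun q => pullbackMetric3 φ g q 0 1) p =
        deriv (deriv (fun t => pullbackMetric3 φ g (Function.update p 2 t) 0 1)) (p 2) := rfl
    rw [h1, hF]
    exact key
  have rhs_eq : d2v (fun q => g q 0 1) (φ p) =
      deriv (deriv (fun s : ℝ => g (Function.update (φ p) 2 s) 0 1))
        (p 2 / deriv C (p 0) + B (p 0) (p 1)) := by
    have h2 : d2v (fun q => g q 0 1) (φ p) =
        deriv (deriv (fun s : ℝ => g (Function.update (φ p) 2 s) 0 1)) (φ p 2) := rfl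
    rw [h2, hφ2 p]
  rw [lhs_eq, rhs_eq]
  have hc := hC' (p 0)
  field_simp
end
end

section
/- Let n = 3 with coordinates (u, x, v) on ℝ³, let g be a smooth metric of Kundt shape whose (u,x)-entry satisfies ∂²_v g_{ux} ≡ 0 identically, and let φ be a shape transformation. Then the third v-derivative of the (u,u)-entry is a relative invariant on this locus: there exists a smooth nowhere-vanishing function μ : ℝ³ → ℝ such that ∂³_v (φ*g)_{uu}(p) = μ(p) · (∂³_v g_{uu})(φ(p)) for all p ∈ ℝ³ (Appendix: H_{vvv} is a relative differential invariant on the submanifold cut out by W_{vv} = 0). -/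
open Matrix

noncomputable section

private lemma hasDerivAt_affine' (m b t : ℝ) : HasDerivAt (fun t : ℝ => m * t + b) m t := by
  simpa using ((hasDerivAt_id t).const_mul m).add_const b

private lemma hasDerivAt_K_affine {f : ℝ → ℝ} (hf : Differentiable ℝ f) (K m b t : ℝ) :
    HasDerivAt (fun t => K * f (m * t + b)) (K * (deriv f (m * t + b) * m)) t :=
  ((hf (m * t + b)).hasDerivAt.comp t (hasDerivAt_affine' m b t)).const_mul K

/-- **Appendix.** On the locus `W_{vv} = ∂²_v g_{ux} ≡ 0`, the function
`H_{vvv} = ∂³_v g_{uu}` is a relative differential invariant of the shape-preserving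
pseudogroup in dimension 3. -/
theorem Hvvv_is_relative_invariant
    (g : (Fin 3 → ℝ) → Matrix (Fin 3) (Fin 3) ℝ)
    (φ : (Fin 3 → ℝ) → Fin 3 → ℝ)
    (hg : IsKundtShape3 g)
    (hWvv : ∀ p : Fin 3 → ℝ, d2v (fun q => g q 0 1) p = 0)
    (hφ : IsShapeTransform3 φ) :
    ∃ mu : (Fin 3 → ℝ) → ℝ,
      ContDiff ℝ (⊤ : ℕ∞) mu ∧ (∀ p, mu p ≠ 0) ∧
      ∀ p : Fin 3 → ℝ,
        d3v (fun q => pullbackMetric3 φ g q 0 0) p =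
          mu p * d3v (fun q => g q 0 0) (φ p) := by
  obtain ⟨C, A, B, hC, hA, hB, hC', hA', hφ0, hφ1, hφ2⟩ := hφ
  have hCd : ContDiff ℝ (⊤ : ℕ∞) (deriv C) := (contDiff_infty_iff_deriv.mp hC).2
  refine ⟨fun p => (deriv C (p 0))⁻¹, ?_, fun p => inv_ne_zero (hC' (p 0)), ?_⟩
  · exact (hCd.comp (contDiff_pi.mp contDiff_id 0)).inv fun p => hC' (p 0)
  intro p
  set c : ℝ := deriv C (p 0) with hcdef
  have hc0 : c ≠ 0 := hC' (p 0)
  set m : ℝ := c⁻¹ with hmdef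
  set b : ℝ := B (p 0) (p 1) with hbdef
  set a : ℝ := deriv (fun s => A s (p 1)) (p 0) with hadef
  set α : ℝ := deriv (fun s => (deriv C s)⁻¹) (p 0) with hαdef
  set β : ℝ := deriv (fun s => B s (p 1)) (p 0) with hβdef
  -- coordinates of updated points
  have hq0 : ∀ t : ℝ, Function.update p 2 t 0 = p 0 := fun t => Function.update_of_ne (by decide) _ _
  have hq1 : ∀ t : ℝ, Function.update p 2 t 1 = p 1 := fun t => Function.update_of_ne (by decide) _ _
  have hq2 : ∀ t : ℝ, Function.update p 2 t 2 = t := fun t => Function.update_self _ _ _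
  -- the transformed point
  have hpoint : ∀ t : ℝ, φ (Function.update p 2 t) = Function.update (φ p) 2 (m * t + b) := by
    intro t
    funext i
    fin_cases i
    · show φ (Function.update p 2 t) 0 = Function.update (φ p) 2 (m * t + b) 0
      rw [hφ0, hq0, Function.update_of_ne (show (0 : Fin 3) ≠ 2 by decide), hφ0]
    · show φ (Function.update p 2 t) 1 = Function.update (φ p) 2 (m * t + b) 1
      rw [hφ1, hq0, hq1, Function.update_of_ne (show (1 : Fin 3) ≠ 2 by decide), hφ1]
    · show φ (Function.update p 2 t) 2 = Function.update (φ p) 2 (m * t + b) 2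
      rw [hφ2, hq0, hq1, hq2, Function.update_self, ← hcdef, ← hbdef, hmdef,
        div_eq_mul_inv, mul_comm t c⁻¹]
  -- Jacobian entries of the first column along the v-line
  have hJ00 : ∀ t : ℝ, jacobianMatrix3 φ (Function.update p 2 t) 0 0 = c := by
    intro t
    simp only [jacobianMatrix3, Matrix.of_apply]
    rw [show (fun s => φ (Function.update (Function.update p 2 t) 0 s) 0) = C from
      funext fun s => by rw [hφ0, Function.update_self], hq0]
  have hJ10 : ∀ t : ℝ, jacobianMatrix3 φ (Function.update p 2 t) 1 0 = a := by
    intro t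
    simp only [jacobianMatrix3, Matrix.of_apply]
    rw [show (fun s => φ (Function.update (Function.update p 2 t) 0 s) 1)
        = (fun s => A s (p 1)) from funext fun s => by
      rw [hφ1, Function.update_self, Function.update_of_ne (by decide), hq1], hq0]
  -- differentiability facts for the J20 entry
  have dInv : DifferentiableAt ℝ (fun s => (deriv C s)⁻¹) (p 0) :=
    ((hCd.differentiable (by simp)) (p 0)).inv (hC' (p 0))
  have dB : Differentiable ℝ (fun s => B s (p 1)) :=
    (hB.comp (contDiff_id.prodMk contDiff_const)).differentiable (by simp)
  have hJ20 : ∀ t : ℝ, jacobianMatrix3 φ (Function.update p 2 t) 2 0 = t * α + β := by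
    intro t
    simp only [jacobianMatrix3, Matrix.of_apply]
    rw [show (fun s => φ (Function.update (Function.update p 2 t) 0 s) 2)
        = (fun s => t * (deriv C s)⁻¹ + B s (p 1)) from funext fun s => by
      rw [hφ2, Function.update_self, Function.update_of_ne (by decide), hq2,
        Function.update_of_ne (by decide), hq1, div_eq_mul_inv], hq0]
    rw [deriv_fun_add (dInv.const_mul t) (dB (p 0)), deriv_const_mul t dInv]
  -- the restricted metric components along the v-line through φ p
  set h00 : ℝ → ℝ := fun s => g (Function.update (φ p) 2 s) 0 0 with hh00
  set h01 : ℝ → ℝ := fun s => g (Function.update (φ p) 2 s) 0 1 with hh01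
  set h11 : ℝ → ℝ := fun s => g (Function.update (φ p) 2 s) 1 1 with hh11
  have hupd : ContDiff ℝ (⊤ : ℕ∞) (fun s : ℝ => Function.update (φ p) 2 s) :=
    contDiff_update _ (φ p) 2
  have hs00 : ContDiff ℝ (⊤ : ℕ∞) h00 := (hg.smooth 0 0).comp hupd
  have hs01 : ContDiff ℝ (⊤ : ℕ∞) h01 := (hg.smooth 0 1).comp hupd
  have hs11 : ContDiff ℝ (⊤ : ℕ∞) h11 := (hg.smooth 1 1).comp hupd
  have D00 : Differentiable ℝ h00 := hs00.differentiable (by simp)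
  have hs00' : ContDiff ℝ (⊤ : ℕ∞) (deriv h00) := (contDiff_infty_iff_deriv.mp hs00).2
  have D00' : Differentiable ℝ (deriv h00) := hs00'.differentiable (by simp)
  have D00'' : Differentiable ℝ (deriv (deriv h00)) :=
    ((contDiff_infty_iff_deriv.mp hs00').2).differentiable (by simp)
  have D01 : Differentiable ℝ h01 := hs01.differentiable (by simp)
  have D01' : Differentiable ℝ (deriv h01) :=
    ((contDiff_infty_iff_deriv.mp hs01).2).differentiable (by simp)
  have D11 : Differentiable ℝ h11 := hs11.differentiable (by simp)
  -- the two vanishing facts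
  have hk1 : ∀ s : ℝ, deriv h11 s = 0 := by
    intro s
    have h := hg.vIndep (Function.update (φ p) 2 s)
    rwa [show (fun t => g (Function.update (Function.update (φ p) 2 s) 2 t) 1 1) = h11 from
      funext fun t => by rw [Function.update_idem], Function.update_self] at h
  have hg2 : ∀ s : ℝ, deriv (deriv h01) s = 0 := by
    intro s
    have h := hWvv (Function.update (φ p) 2 s)
    simp only [d2v] at h
    rwa [show (fun t => g (Function.update (Function.update (φ p) 2 s) 2 t) 0 1) = h01 from
      funext fun t => by rw [Function.update_idem], Function.update_self] at h
  -- Explicit form of the pullback (0,0)-entry along the v-line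
  have hF : (fun t => pullbackMetric3 φ g (Function.update p 2 t) 0 0)
      = fun t => c ^ 2 * h00 (m * t + b) + (2 * c * a) * h01 (m * t + b)
          + a ^ 2 * h11 (m * t + b) + ((2 * c * α) * t + 2 * c * β) := by
    funext t
    have hsymm := hg.symm (Function.update (φ p) 2 (m * t + b))
    simp only [pullbackMetric3, Matrix.mul_apply, Fin.sum_univ_three, Matrix.transpose_apply]
    rw [hJ00 t, hJ10 t, hJ20 t, hpoint t]
    rw [hsymm.apply 0 1, hsymm.apply 0 2, hsymm.apply 1 2]
    rw [hg.vv, hg.xv, hg.uv]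
    simp only [hh00, hh01, hh11]
    ring
  -- differentiation, three times
  have HF : ∀ t : ℝ, HasDerivAt
      (fun t => c ^ 2 * h00 (m * t + b) + (2 * c * a) * h01 (m * t + b)
          + a ^ 2 * h11 (m * t + b) + ((2 * c * α) * t + 2 * c * β))
      (c ^ 2 * (deriv h00 (m * t + b) * m) + (2 * c * a) * (deriv h01 (m * t + b) * m)
          + a ^ 2 * (deriv h11 (m * t + b) * m) + 2 * c * α) t := by
    intro t
    refine (((hasDerivAt_K_affine D00 _ m b t).add (hasDerivAt_K_affine D01 _ m b t)).add
      (hasDerivAt_K_affine D11 _ m b t)).add ?_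
    simpa using ((hasDerivAt_id t).const_mul (2 * c * α)).add_const (2 * c * β)
  have s1 : deriv (fun t => c ^ 2 * h00 (m * t + b) + (2 * c * a) * h01 (m * t + b)
          + a ^ 2 * h11 (m * t + b) + ((2 * c * α) * t + 2 * c * β))
      = fun t => (c ^ 2 * m) * deriv h00 (m * t + b)
          + ((2 * c * a * m) * deriv h01 (m * t + b) + 2 * c * α) := by
    funext t
    rw [(HF t).deriv, hk1 (m * t + b)]
    ring
  have HG1 : ∀ t : ℝ, HasDerivAt
      (fun t => (c ^ 2 * m) * deriv h00 (m * t + b)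
          + ((2 * c * a * m) * deriv h01 (m * t + b) + 2 * c * α))
      ((c ^ 2 * m) * (deriv (deriv h00) (m * t + b) * m)
          + ((2 * c * a * m) * (deriv (deriv h01) (m * t + b) * m) + 0)) t := by
    intro t
    exact (hasDerivAt_K_affine D00' _ m b t).add
      ((hasDerivAt_K_affine D01' _ m b t).add (hasDerivAt_const t (2 * c * α)))
  have s2 : deriv (fun t => (c ^ 2 * m) * deriv h00 (m * t + b)
          + ((2 * c * a * m) * deriv h01 (m * t + b) + 2 * c * α))
      = fun t => (c ^ 2 * m ^ 2) * deriv (deriv h00) (m * t + b) := by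
    funext t
    rw [(HG1 t).deriv, hg2 (m * t + b)]
    ring
  -- conclude
  simp only [d3v]
  rw [hF, s1, s2,
    (hasDerivAt_K_affine D00'' (c ^ 2 * m ^ 2) m b (p 2)).deriv,
    show m * p 2 + b = φ p 2 from by rw [hφ2 p, div_eq_mul_inv, mul_comm, hmdef, hcdef, hbdef],
    show (fun t => g (Function.update (φ p) 2 t) 0 0) = h00 from hh00.symm]
  rw [hmdef]
  field_simp
  rw [← hcdef, eq_div_iff hc0, mul_comm]
end
end
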